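/- With 𝒞_k defined by 𝒞_0(z) = 𝔠(z) and 𝒞_{k+1}(z) = [(𝔠(z) + y_k/z)𝒞_k(z)]_+, the evaluation x_1·𝒞_2(0) with y_0 = x_3, y_1 = x_2 equals the regular 3-loop polynomial x_1(1 − 2x_2)(1 − x_3), and x_1·𝒞_3(0) with y_0 = x_4, y_1 = x_3, y_2 = x_2 equals x_1(1 − 3x_2 − 2x_3 + 5x_2x_3)(1 − x_4). -/

import Mathlib

/-- The nonnegative-degree part of z⁻¹·f: `plusDiv f = [f/z]_+`. -/
noncomputable def plusDiv {A : Type*} [CommRing A] (f : PowerSeries A) : PowerSeries A :=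
  PowerSeries.mk fun n => PowerSeries.coeff (n + 1) f

/-- With 𝒞₀(z) = 𝔠(z) and 𝒞_{k+1}(z) = [(𝔠(z) + y_k/z)𝒞_k(z)]_+, the
reconstruction formula gives the regular loop polynomials:
x₁·𝒞₂(0)(y₀ = x₃, y₁ = x₂) = x₁(1 − 2x₂)(1 − x₃) and
x₁·𝒞₃(0)(y₀ = x₄, y₁ = x₃, y₂ = x₂) = x₁(1 − 3x₂ − 2x₃ + 5x₂x₃)(1 − x₄). -/
theorem generating_function_reconstruction
    (c : PowerSeries (MvPolynomial ℕ ℚ))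
    (hceq : PowerSeries.X * c ^ 2 + c - 1 = 0)
    (hc0 : PowerSeries.constantCoeff c = 1)
    (C : ℕ → PowerSeries (MvPolynomial ℕ ℚ))
    (hC0 : C 0 = c)
    (hrec : ∀ k : ℕ, C (k + 1) =
      c * C k + PowerSeries.C (MvPolynomial.X k : MvPolynomial ℕ ℚ) * plusDiv (C k)) :
    (∀ x1 x2 x3 : ℚ,
      x1 * MvPolynomial.eval (fun n => if n = 0 then x3 else if n = 1 then x2 else 0)
          (PowerSeries.constantCoeff (C 2)) =
        x1 * (1 - 2 * x2) * (1 - x3)) ∧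
    (∀ x1 x2 x3 x4 : ℚ,
      x1 * MvPolynomial.eval
          (fun n => if n = 0 then x4 else if n = 1 then x3 else if n = 2 then x2 else 0)
          (PowerSeries.constantCoeff (C 3)) =
        x1 * (1 - 3 * x2 - 2 * x3 + 5 * x2 * x3) * (1 - x4)) := by
  let A := MvPolynomial ℕ ℚ
  let co : ℕ → PowerSeries A → A := fun n f => PowerSeries.coeff n f
  have mul0 : ∀ f g : PowerSeries A, co 0 (f * g) = co 0 f * co 0 g := by
    intro f g; simp [co, PowerSeries.coeff_mul]
  have mul1 : ∀ f g : PowerSeries A, co 1 (f * g) = co 0 f * co 1 g + co 1 f * co 0 g := by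
    intro f g
    simp [co, PowerSeries.coeff_mul, Finset.Nat.sum_antidiagonal_eq_sum_range_succ_mk,
      Finset.sum_range_succ]
  have mul2 : ∀ f g : PowerSeries A,
      co 2 (f * g) = co 0 f * co 2 g + co 1 f * co 1 g + co 2 f * co 0 g := by
    intro f g
    simp [co, PowerSeries.coeff_mul, Finset.Nat.sum_antidiagonal_eq_sum_range_succ_mk,
      Finset.sum_range_succ]
  have hc0' : co 0 c = 1 := by simpa [co, PowerSeries.coeff_zero_eq_constantCoeff] using hc0
  have hrecc : ∀ n : ℕ, co n (c * c) + co (n + 1) c = 0 := by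
    intro n
    have h := congrArg (PowerSeries.coeff (n + 1)) hceq
    simp only [map_sub, map_add, map_zero] at h
    rw [sq, PowerSeries.coeff_succ_X_mul, PowerSeries.coeff_one] at h
    simpa [co, Nat.succ_ne_zero] using h
  have hc1 : co 1 c = -1 := by
    have := hrecc 0; rw [mul0, hc0'] at this; linear_combination this
  have hc2 : co 2 c = 2 := by
    have := hrecc 1; rw [mul1, hc0', hc1] at this; linear_combination this
  have hc3 : co 3 c = -5 := by
    have := hrecc 2; rw [mul2, hc0', hc1, hc2] at this; linear_combination this
  have hpd : ∀ (n : ℕ) (f : PowerSeries A), co n (plusDiv f) = co (n + 1) f := by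
    intro n f; simp [co, plusDiv]
  have hCm : ∀ (n : ℕ) (a : A) (f : PowerSeries A),
      co n (PowerSeries.C a * f) = a * co n f := by
    intro n a f; simp [co]
  have coadd : ∀ (n : ℕ) (f g : PowerSeries A), co n (f + g) = co n f + co n g := by
    intro n f g; simp [co]
  have hr1 : C 1 = c * C 0 + PowerSeries.C (MvPolynomial.X 0) * plusDiv (C 0) := hrec 0
  have hr2 : C 2 = c * C 1 + PowerSeries.C (MvPolynomial.X 1) * plusDiv (C 1) := hrec 1
  have hr3 : C 3 = c * C 2 + PowerSeries.C (MvPolynomial.X 2) * plusDiv (C 2) := hrec 2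
  set X0 : A := MvPolynomial.X 0 with hX0
  set X1 : A := MvPolynomial.X 1 with hX1
  set X2 : A := MvPolynomial.X 2 with hX2
  have h10 : co 0 (C 1) = 1 - X0 := by
    rw [hr1, hC0, coadd, mul0, hCm, hpd, hc0', hc1]; ring
  have h11 : co 1 (C 1) = -2 + 2 * X0 := by
    rw [hr1, hC0, coadd, mul1, hCm, hpd, hc0', hc1, hc2]; ring
  have h12 : co 2 (C 1) = 5 - 5 * X0 := by
    rw [hr1, hC0, coadd, mul2, hCm, hpd, hc0', hc1, hc2, hc3]; ring
  have h20 : co 0 (C 2) = (1 - X0) * (1 - 2 * X1) := by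
    rw [hr2, coadd, mul0, hCm, hpd, hc0', h10, h11]; ring
  have h21 : co 1 (C 2) = -3 + 3 * X0 + 5 * X1 - 5 * X0 * X1 := by
    rw [hr2, coadd, mul1, hCm, hpd, hc0', hc1, h10, h11, h12]; ring
  have h30 : co 0 (C 3) = (1 - X0) * (1 - 2 * X1 - 3 * X2 + 5 * X1 * X2) := by
    rw [hr3, coadd, mul0, hCm, hpd, hc0', h20, h21]; ring
  have e2 : PowerSeries.constantCoeff (C 2) = (1 - X0) * (1 - 2 * X1) := by
    simpa [co, PowerSeries.coeff_zero_eq_constantCoeff] using h20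
  have e3 : PowerSeries.constantCoeff (C 3) =
      (1 - X0) * (1 - 2 * X1 - 3 * X2 + 5 * X1 * X2) := by
    simpa [co, PowerSeries.coeff_zero_eq_constantCoeff] using h30
  constructor
  · intro x1 x2 x3
    rw [show PowerSeries.constantCoeff (C 2)
        = (1 - X0) * (1 - 2 * X1) from e2]
    simp [hX0, hX1]; ring
  · intro x1 x2 x3 x4
    rw [show PowerSeries.constantCoeff (C 3)
        = (1 - X0) * (1 - 2 * X1 - 3 * X2 + 5 * X1 * X2) from e3]
    simp [hX0, hX1, hX2]; ring
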